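/- Let A = L + D + Lᵀ be a real symmetric n×n matrix, where L is strictly lower triangular and D is diagonal with positive diagonal entries, and let D^{−1/2} be the diagonal matrix with entries (D_ii)^{−1/2}. Let μ := λ_min(D^{−1/2}(L + Lᵀ)D^{−1/2}) + 1, where λ_min is the least element of the real spectrum of the symmetric matrix D^{−1/2}(L + Lᵀ)D^{−1/2}. For ω ∈ ℝ with ω ≠ 0 and ω ≠ 2, let M(ω) := ω⁻¹(2−ω)⁻¹ (D + ωL) D⁻¹ (D + ωLᵀ), N(ω) := M(ω) − A, H(ω) := M(ω)⁻¹N(ω), and for even ℓ ≥ 2 let C^(ℓ)(ω) := ∑_{i=0}^{ℓ−1} H(ω)ⁱ M(ω)⁻¹. If either (i) μ < 1/2, μ ≠ 0, and 0 < ω < (1 − √(1 − 2μ))/μ, or (ii) μ = 0 and 0 < ω < 1, then C^(ℓ)(ω) is symmetric positive definite. -/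

import Mathlib

set_option maxHeartbeats 1000000

open Matrix Pointwise

section Aux

variable {n : ℕ}

lemma spec_lower_bound {S : Matrix (Fin n) (Fin n) ℝ} (hS : S.IsHermitian) (c : ℝ)
    (hc : ∀ lam ∈ spectrum ℝ S, c ≤ lam) (w : Fin n → ℝ) :
    c * (w ⬝ᵥ w) ≤ w ⬝ᵥ (S *ᵥ w) := by
  have halg : S - c • (1 : Matrix (Fin n) (Fin n) ℝ)
      = S - (algebraMap ℝ (Matrix (Fin n) (Fin n) ℝ)) c := by
    rw [Algebra.algebraMap_eq_smul_one]
  have hT : (S - c • (1 : Matrix (Fin n) (Fin n) ℝ)).IsHermitian := by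
    apply hS.sub
    unfold Matrix.IsHermitian
    simp
  have hpsd : (S - c • (1 : Matrix (Fin n) (Fin n) ℝ)).PosSemidef := by
    apply hT.posSemidef_iff_eigenvalues_nonneg.mpr
    intro i
    have hmem := hT.eigenvalues_mem_spectrum_real i
    have hset : spectrum ℝ (S - c • (1 : Matrix (Fin n) (Fin n) ℝ))
        = spectrum ℝ S - ({c} : Set ℝ) := by rw [halg, ← spectrum.sub_singleton_eq]
    rw [hset] at hmem
    obtain ⟨x, hx, y, hy, hxy⟩ := hmem
    simp only [Set.mem_singleton_iff] at hy
    subst hy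
    have := hc x hx
    have hxy' : x - y = hT.eigenvalues i := hxy
    rw [Pi.zero_apply]
    linarith
  have h := hpsd.dotProduct_mulVec_nonneg w
  simp only [star_trivial, sub_mulVec, dotProduct_sub, smul_mulVec, one_mulVec,
    dotProduct_smul, smul_eq_mul] at h
  linarith

lemma posDef_conj {G B : Matrix (Fin n) (Fin n) ℝ} (hG : G.PosDef) (hB : IsUnit B) :
    (B * G * Bᵀ).PosDef := by
  have hpsd := hG.posSemidef.mul_mul_conjTranspose_same B
  rw [conjTranspose_eq_transpose_of_trivial] at hpsd
  refine .of_dotProduct_mulVec_pos hpsd.1 fun x hx => ?_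
  have hBt : IsUnit Bᵀ := by
    rw [Matrix.isUnit_iff_isUnit_det, det_transpose, ← Matrix.isUnit_iff_isUnit_det]
    exact hB
  have hinj : Function.Injective (Bᵀ.mulVec) := mulVec_injective_iff_isUnit.mpr hBt
  have hy : Bᵀ *ᵥ x ≠ 0 := by
    intro h
    exact hx (hinj (by simpa using h))
  have h2 := hG.dotProduct_mulVec_pos hy
  rw [star_trivial, ← mulVec_mulVec, ← mulVec_mulVec, dotProduct_mulVec, ← mulVec_transpose]
  simpa using h2

lemma posDef_smul {G : Matrix (Fin n) (Fin n) ℝ} (hG : G.PosDef) {c : ℝ} (hc : 0 < c) :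
    (c • G).PosDef := by
  refine .of_dotProduct_mulVec_pos ?_ fun x hx => ?_
  · unfold Matrix.IsHermitian
    rw [conjTranspose_smul, hG.1]
    simp
  · rw [smul_mulVec, dotProduct_smul, smul_eq_mul]
    exact mul_pos hc (hG.dotProduct_mulVec_pos hx)

lemma omega_bounds (lmin ω : ℝ)
    (hcase : (lmin + 1 < 1 / 2 ∧ lmin + 1 ≠ 0 ∧ 0 < ω ∧
        ω < (1 - Real.sqrt (1 - 2 * (lmin + 1))) / (lmin + 1)) ∨
      (lmin + 1 = 0 ∧ 0 < ω ∧ ω < 1)) :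
    0 < ω ∧ ω < 2 ∧ 0 < (lmin + 1) * ω ^ 2 - 2 * ω + 2 := by
  rcases hcase with ⟨hμh, hμne, hω, hlt⟩ | ⟨hμ0, hω, hlt⟩
  · set μ := lmin + 1 with hμ
    set s := Real.sqrt (1 - 2 * μ) with hs
    have h2μ : 0 < 1 - 2 * μ := by linarith
    have hs0 : 0 ≤ s := Real.sqrt_nonneg _
    have hs2 : s ^ 2 = 1 - 2 * μ := Real.sq_sqrt h2μ.le
    rcases lt_or_gt_of_ne hμne with hμneg | hμpos
    · have h1 : 1 - s < ω * μ := (lt_div_iff_of_neg hμneg).mp hlt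
      have hs1 : 1 < s := by nlinarith
      have h3 : 1 - μ * ω < s := by nlinarith
      have h0 : 0 < 1 - μ * ω := by nlinarith [mul_pos hω (neg_pos.mpr hμneg)]
      have h4 : (1 - μ * ω) ^ 2 < s ^ 2 := by
        apply pow_lt_pow_left₀ h3 h0.le
        norm_num
      refine ⟨hω, ?_, ?_⟩
      · have hr : (1 - s) / μ ≤ 2 := by
          rw [div_le_iff_of_neg hμneg]
          nlinarith
        linarith
      · nlinarith [h4, hs2, hμneg]
    · have h1 : ω * μ < 1 - s := (lt_div_iff₀ hμpos).mp hlt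
      have h3 : s < 1 - μ * ω := by nlinarith
      have h4 : s ^ 2 < (1 - μ * ω) ^ 2 := by
        apply pow_lt_pow_left₀ h3 hs0
        norm_num
      refine ⟨hω, ?_, ?_⟩
      · have hr : (1 - s) / μ ≤ 2 := by
          rw [div_le_iff₀ hμpos]
          nlinarith
        linarith
      · nlinarith [h4, hs2, hμpos]
  · refine ⟨hω, by linarith, by rw [hμ0]; nlinarith⟩

lemma posSemidef_sum {ι : Type*} (s : Finset ι) (f : ι → Matrix (Fin n) (Fin n) ℝ)
    (h : ∀ i ∈ s, (f i).PosSemidef) : (∑ i ∈ s, f i).PosSemidef := by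
  induction s using Finset.cons_induction with
  | empty => simpa using Matrix.PosSemidef.zero
  | cons a s ha ih =>
      rw [Finset.sum_cons]
      exact ((h a (Finset.mem_cons_self a s)).add
        (ih (fun i hi => h i (Finset.mem_cons_of_mem hi))))

end Aux

/-- A real symmetric matrix is positive definite: `vᵀPv > 0` for all nonzero `v`. -/
def Matrix.IsPD {n : ℕ} (P : Matrix (Fin n) (Fin n) ℝ) : Prop :=
  Pᵀ = P ∧ ∀ v : Fin n → ℝ, v ≠ 0 → 0 < v ⬝ᵥ (P *ᵥ v)

/-- The diagonal matrix `D^{-1/2}` with entries `(D_ii)^{-1/2}`. -/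
noncomputable def dhalf {n : ℕ} (D : Matrix (Fin n) (Fin n) ℝ) :
    Matrix (Fin n) (Fin n) ℝ :=
  Matrix.diagonal fun i => (Real.sqrt (D i i))⁻¹

/-- The SSOR splitting matrix `M(ω) = ω⁻¹(2-ω)⁻¹ (D + ωL) D⁻¹ (D + ωLᵀ)`. -/
noncomputable def ssorM {n : ℕ} (L D : Matrix (Fin n) (Fin n) ℝ) (ω : ℝ) :
    Matrix (Fin n) (Fin n) ℝ :=
  (ω⁻¹ * (2 - ω)⁻¹) • ((D + ω • L) * D⁻¹ * (D + ω • Lᵀ))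

/-- The SSOR inner-iteration preconditioning matrix
`C^(ℓ)(ω) = ∑_{i=0}^{ℓ-1} H(ω)ⁱ M(ω)⁻¹`, where `A = L + D + Lᵀ`,
`N(ω) = M(ω) - A` and `H(ω) = M(ω)⁻¹ N(ω)`. -/
noncomputable def ssorC {n : ℕ} (L D : Matrix (Fin n) (Fin n) ℝ) (ω : ℝ) (ℓ : ℕ) :
    Matrix (Fin n) (Fin n) ℝ :=
  (∑ i ∈ Finset.range ℓ,
      ((ssorM L D ω)⁻¹ * (ssorM L D ω - (L + D + Lᵀ))) ^ i) * (ssorM L D ω)⁻¹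

theorem stmt_15 {n : ℕ} (L D : Matrix (Fin n) (Fin n) ℝ)
    (hL : ∀ i j : Fin n, i ≤ j → L i j = 0)
    (hD : D.IsDiag) (hDpos : ∀ i, 0 < D i i)
    -- `lmin` is the least element of the real spectrum of `D^{-1/2}(L + Lᵀ)D^{-1/2}`,
    -- so that `μ = lmin + 1`
    (lmin : ℝ)
    (hmem : lmin ∈ spectrum ℝ (dhalf D * (L + Lᵀ) * dhalf D))
    (hmin : ∀ lam ∈ spectrum ℝ (dhalf D * (L + Lᵀ) * dhalf D), lmin ≤ lam)
    (ω : ℝ) (hω0 : ω ≠ 0) (hω2 : ω ≠ 2)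
    (ℓ : ℕ) (heven : Even ℓ) (hℓ : 2 ≤ ℓ)
    (hcase : (lmin + 1 < 1 / 2 ∧ lmin + 1 ≠ 0 ∧ 0 < ω ∧ ω < (1 - Real.sqrt (1 - 2 * (lmin + 1))) / (lmin + 1)) ∨ (lmin + 1 = 0 ∧ 0 < ω ∧ ω < 1)) :
    (ssorC L D ω ℓ).IsPD := by
  classical
  obtain ⟨hωpos, hωlt2, hq⟩ := omega_bounds lmin ω hcase
  -- D facts
  have hDdiag : D = Matrix.diagonal D.diag := hD.diagonal_diag.symm
  have hDinv : D⁻¹ = Matrix.diagonal (fun i => (D i i)⁻¹) := by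
    apply Matrix.inv_eq_right_inv
    ext i j
    rw [Matrix.mul_diagonal]
    by_cases h : i = j
    · subst h; simp [Matrix.one_apply, mul_inv_cancel₀ (hDpos i).ne']
    · simp [Matrix.one_apply, h, hD h]
  have hDDi : D * D⁻¹ = 1 := by
    rw [hDinv]
    ext i j
    rw [Matrix.mul_diagonal]
    by_cases h : i = j
    · subst h; simp [Matrix.one_apply, mul_inv_cancel₀ (hDpos i).ne']
    · simp [Matrix.one_apply, h, hD h]
  have hDiD : D⁻¹ * D = 1 := by
    rw [hDinv]
    ext i j
    rw [Matrix.diagonal_mul]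
    by_cases h : i = j
    · subst h; simp [Matrix.one_apply, inv_mul_cancel₀ (hDpos i).ne']
    · simp [Matrix.one_apply, h, hD h]
  have hDt : Dᵀ = D := by rw [hDdiag, diagonal_transpose]
  have hDit : (D⁻¹)ᵀ = D⁻¹ := by rw [hDinv, diagonal_transpose]
  have hDpd : D.PosDef := by
    rw [hDdiag]
    exact Matrix.PosDef.diagonal (fun i => by simpa [Matrix.diag] using hDpos i)
  have hDipd : D⁻¹.PosDef := hDpd.inv
  set Mω := ssorM L D ω with hMω
  set c0 := ω⁻¹ * (2 - ω)⁻¹ with hc0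
  have hc0pos : 0 < c0 := mul_pos (inv_pos.mpr hωpos) (inv_pos.mpr (by linarith))
  set B := D + ω • L with hB
  have hBt : Bᵀ = D + ω • Lᵀ := by rw [hB, transpose_add, transpose_smul, hDt]
  have hMeq : Mω = c0 • (B * D⁻¹ * Bᵀ) := by rw [hMω, ssorM, hBt]
  -- B invertible
  have hBlow : B.BlockTriangular OrderDual.toDual := by
    intro i j hij
    have h : i < j := hij
    rw [hB]
    simp [Matrix.add_apply, Matrix.smul_apply, hD (ne_of_lt h), hL i j h.le]
  have hdetB : B.det = ∏ i, D i i := by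
    rw [Matrix.det_of_lowerTriangular B hBlow]
    apply Finset.prod_congr rfl
    intro i _
    rw [hB]
    simp [Matrix.add_apply, Matrix.smul_apply, hL i i le_rfl]
  have hBunit : IsUnit B := by
    rw [Matrix.isUnit_iff_isUnit_det, hdetB]
    exact (Finset.prod_pos (fun i _ => hDpos i)).ne'.isUnit
  -- M pos def
  have hMpd : Mω.PosDef := by
    rw [hMeq]
    exact posDef_smul (posDef_conj hDipd hBunit) hc0pos
  have hMs : Mωᵀ = Mω := (conjTranspose_eq_transpose_of_trivial Mω).symm.trans hMpd.1
  have hMdet : IsUnit Mω.det := (Matrix.isUnit_iff_isUnit_det _).mp hMpd.isUnit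
  set Mi := Mω⁻¹ with hMi
  have hMMi : Mω * Mi = 1 := Matrix.mul_nonsing_inv _ hMdet
  have hMiM : Mi * Mω = 1 := Matrix.nonsing_inv_mul _ hMdet
  have hMis : Miᵀ = Mi := by rw [hMi, Matrix.transpose_nonsing_inv, hMs]
  have hMipd : Mi.PosDef := hMpd.inv
  set Am := L + D + Lᵀ with hAm
  have hAs : Amᵀ = Am := by
    rw [hAm, transpose_add, transpose_add, transpose_transpose, hDt]
    abel
  -- expansion of B * D⁻¹ * Bᵀ
  have hLDiD : L * D⁻¹ * D = L := by rw [mul_assoc, hDiD, mul_one]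
  have hDDiLt : D * D⁻¹ * Lᵀ = Lᵀ := by rw [hDDi, one_mul]
  have hexp : B * D⁻¹ * Bᵀ = D + ω • L + ω • Lᵀ + (ω * ω) • (L * D⁻¹ * Lᵀ) := by
    rw [hBt, hB]
    simp only [add_mul, mul_add, smul_mul_assoc, mul_smul_comm, smul_smul, hDDi, hLDiD,
      hDDiLt, one_mul]
    module
  set Gm := Mω + (Mω - Am) with hGm
  have hGrepr : Gm = (2 * c0 - 1) • D + (2 * c0 * ω - 1) • (L + Lᵀ)
      + (2 * c0 * (ω * ω)) • (L * D⁻¹ * Lᵀ) := by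
    rw [hGm, hMeq, hexp, hAm]
    module
  have hGs : Gmᵀ = Gm := by
    rw [hGrepr]
    simp only [transpose_add, transpose_smul, transpose_mul, transpose_transpose, hDt, hDit,
      mul_assoc]
    module
  -- spectral bound
  have hsqrt_pos : ∀ i, 0 < Real.sqrt (D i i) := fun i => Real.sqrt_pos.mpr (hDpos i)
  have hSsym : (dhalf D * (L + Lᵀ) * dhalf D).IsHermitian := by
    unfold Matrix.IsHermitian
    rw [conjTranspose_eq_transpose_of_trivial]
    simp only [transpose_mul, transpose_add, transpose_transpose, dhalf, diagonal_transpose,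
      mul_assoc]
    rw [add_comm Lᵀ L]
  have ht2 : ∀ v : Fin n → ℝ, lmin * (v ⬝ᵥ (D *ᵥ v)) ≤ v ⬝ᵥ ((L + Lᵀ) *ᵥ v) := by
    intro v
    set w : Fin n → ℝ := fun i => Real.sqrt (D i i) * v i with hw
    have hkey := spec_lower_bound hSsym lmin hmin w
    have h1 : w ⬝ᵥ w = v ⬝ᵥ (D *ᵥ v) := by
      rw [hDdiag]
      simp only [dotProduct, mulVec_diagonal, hw]
      apply Finset.sum_congr rfl
      intro i _
      have := Real.mul_self_sqrt (hDpos i).le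
      simp only [Matrix.diag]
      ring_nf
      nlinarith [this]
    have hdw : dhalf D *ᵥ w = v := by
      funext i
      simp only [dhalf, mulVec_diagonal, hw]
      rw [← mul_assoc, inv_mul_cancel₀ (hsqrt_pos i).ne', one_mul]
    have h2 : w ⬝ᵥ ((dhalf D * (L + Lᵀ) * dhalf D) *ᵥ w) = v ⬝ᵥ ((L + Lᵀ) *ᵥ v) := by
      rw [← mulVec_mulVec, ← mulVec_mulVec, hdw]
      simp only [dotProduct, dhalf, mulVec_diagonal, hw]
      apply Finset.sum_congr rfl
      intro i _
      have hne : Real.sqrt (D i i) ≠ 0 := (hsqrt_pos i).ne'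
      field_simp
    rw [← h1, ← h2]
    exact hkey
  -- G pos def
  have hLDLt : (L * D⁻¹ * Lᵀ).PosSemidef := by
    have h := hDipd.posSemidef.mul_mul_conjTranspose_same L
    rwa [conjTranspose_eq_transpose_of_trivial] at h
  have h2ωne : (2 : ℝ) - ω ≠ 0 := by intro h; exact hω2 (by linarith)
  have hbval : 2 * c0 * ω - 1 = ω / (2 - ω) := by
    rw [hc0]
    field_simp
    ring
  have hb : 0 < 2 * c0 * ω - 1 := by
    rw [hbval]
    exact div_pos hωpos (by linarith)
  have hkeyval : (2 * c0 - 1) + (2 * c0 * ω - 1) * lmin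
      = ((lmin + 1) * ω ^ 2 - 2 * ω + 2) / (ω * (2 - ω)) := by
    rw [hc0]
    field_simp
    ring
  have hkeypos : 0 < (2 * c0 - 1) + (2 * c0 * ω - 1) * lmin := by
    rw [hkeyval]
    exact div_pos hq (mul_pos hωpos (by linarith))
  have hGpd : Gm.PosDef := by
    refine .of_dotProduct_mulVec_pos ((conjTranspose_eq_transpose_of_trivial Gm).trans hGs) fun v hv => ?_
    rw [star_trivial, hGrepr]
    rw [add_mulVec, add_mulVec, smul_mulVec, smul_mulVec, smul_mulVec]
    simp only [dotProduct_add, dotProduct_smul, smul_eq_mul]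
    have t1 : 0 < v ⬝ᵥ (D *ᵥ v) := by
      have h := hDpd.dotProduct_mulVec_pos hv
      rwa [star_trivial] at h
    have t2 := ht2 v
    have t3 : 0 ≤ v ⬝ᵥ ((L * D⁻¹ * Lᵀ) *ᵥ v) := by
      have h := hLDLt.dotProduct_mulVec_nonneg v
      rwa [star_trivial] at h
    have e2 : ((2 * c0 - 1) + (2 * c0 * ω - 1) * lmin) * (v ⬝ᵥ (D *ᵥ v))
        = (2 * c0 - 1) * (v ⬝ᵥ (D *ᵥ v))
          + (2 * c0 * ω - 1) * (lmin * (v ⬝ᵥ (D *ᵥ v))) := by ring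
    have e3 := mul_le_mul_of_nonneg_left t2 hb.le
    have e4 := mul_pos hkeypos t1
    have e5 : 0 ≤ (2 * c0 * (ω * ω)) * (v ⬝ᵥ ((L * D⁻¹ * Lᵀ) *ᵥ v)) := by
      apply mul_nonneg _ t3
      positivity
    linarith
  -- algebra of C
  set Hm := Mi * (Mω - Am) with hHm
  set Km := Mi * Gm * Mi with hKm
  have hKpd : Km.PosDef := by
    have h := posDef_conj hGpd hMipd.isUnit
    rwa [hMis] at h
  have hfact : Km = Mi + Hm * Mi := by
    rw [hKm, hGm, hHm]
    have e : Mi * (Mω + (Mω - Am)) * Mi = (Mi * Mω) * Mi + (Mi * (Mω - Am)) * Mi := by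
      rw [mul_add, add_mul]
    rw [e, hMiM, one_mul]
  have hHt : Hmᵀ = (Mω - Am) * Mi := by
    rw [hHm, transpose_mul, transpose_sub, hMis, hMs, hAs]
  have hKH : Km * Hmᵀ = Hm * Km := by
    rw [hHt, hfact, hHm]
    noncomm_ring
  have hKHpow : ∀ j : ℕ, Km * (Hmᵀ) ^ j = Hm ^ j * Km := by
    intro j
    induction j with
    | zero => simp
    | succ j ih =>
        rw [pow_succ, pow_succ, ← mul_assoc, ih, mul_assoc, hKH, ← mul_assoc]
  obtain ⟨m, hm⟩ := heven
  have hm1 : 0 < m := by omega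
  have hsplit : ∀ k : ℕ, (∑ i ∈ Finset.range (k + k), Hm ^ i)
      = ∑ j ∈ Finset.range k, (Hm ^ (j + j) + Hm ^ (j + j + 1)) := by
    intro k
    induction k with
    | zero => simp
    | succ k ih =>
        have hkk : k + 1 + (k + 1) = k + k + 1 + 1 := by omega
        rw [hkk, Finset.sum_range_succ, Finset.sum_range_succ, ih, Finset.sum_range_succ,
          add_assoc]
  have hC : ssorC L D ω ℓ = ∑ j ∈ Finset.range m, Hm ^ j * Km * (Hm ^ j)ᵀ := by
    rw [ssorC, ← hMω, ← hAm, ← hMi, ← hHm, hm, hsplit m, Finset.sum_mul]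
    apply Finset.sum_congr rfl
    intro j _
    have e1 : Hm ^ (j + j) * Mi + Hm ^ (j + j + 1) * Mi = Hm ^ (j + j) * Km := by
      rw [hfact, pow_succ, mul_add, mul_assoc]
    rw [add_mul, e1]
    calc Hm ^ (j + j) * Km = Hm ^ j * (Hm ^ j * Km) := by rw [pow_add, mul_assoc]
      _ = Hm ^ j * (Km * (Hmᵀ) ^ j) := by rw [hKHpow j]
      _ = Hm ^ j * Km * (Hm ^ j)ᵀ := by rw [← mul_assoc, ← transpose_pow]
  rw [hC]
  have hterm : ∀ j, (Hm ^ j * Km * (Hm ^ j)ᵀ).PosSemidef := by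
    intro j
    have h := hKpd.posSemidef.mul_mul_conjTranspose_same (Hm ^ j)
    rwa [conjTranspose_eq_transpose_of_trivial] at h
  have hsum : (∑ j ∈ Finset.range m, Hm ^ j * Km * (Hm ^ j)ᵀ).PosDef := by
    have h0 : (0 : ℕ) ∈ Finset.range m := Finset.mem_range.mpr hm1
    rw [← Finset.add_sum_erase _ _ h0]
    apply Matrix.PosDef.add_posSemidef
    · simpa using hKpd
    · exact posSemidef_sum _ _ (fun j _ => hterm j)
  constructor
  · rw [← conjTranspose_eq_transpose_of_trivial]
    exact hsum.1
  · intro v hv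
    have h := hsum.dotProduct_mulVec_pos hv
    rwa [star_trivial] at h
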